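/- Under the hypotheses of the sufficiency direction (convergence in L¹ of V_k = Σ_{i≥0} E(X_{k+i} | F_{k−1}) and W_k = Σ_{i≥1} [X_{k−i} − E(X_{k−i} | F_{k−1})] for every k, with X_i F_∞-measurable and E(X_i | F_{-∞}) = 0), the functions U_k = V_k − W_k satisfy: for every fixed k, E(U_{k+j} | F_k) → 0 in L¹ and U_{k−j} − E(U_{k−j} | F_k) → 0 in L¹ as j → ∞. -/

import Mathlib

open MeasureTheory Filter Finset
open scoped ENNReal Topology

set_option linter.unusedSectionVars false
set_option linter.unusedVariables false

section Aux
variable {Ω : Type*} {m0 : MeasurableSpace Ω} {μ : Measure Ω} [IsProbabilityMeasure μ]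

private lemma aux_eq_zero {a : ℝ≥0∞} {b : ℕ → ℝ≥0∞}
    (h : ∀ N, a ≤ b N) (hb : Tendsto b atTop (𝓝 0)) : a = 0 :=
  le_zero_iff.mp (ge_of_tendsto' hb h)

private lemma cond_diff_le {m : MeasurableSpace Ω} {f g : Ω → ℝ}
    (hf : Integrable f μ) (hg : Integrable g μ) :
    eLpNorm (fun ω => (μ[f|m]) ω - (μ[g|m]) ω) 1 μ ≤ eLpNorm (fun ω => f ω - g ω) 1 μ := by
  have h1 : μ[f - g|m] =ᵐ[μ] fun ω => (μ[f|m]) ω - (μ[g|m]) ω := condExp_sub hf hg m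
  rw [eLpNorm_congr_ae h1.symm]
  exact eLpNorm_one_condExp_le_eLpNorm _

private lemma tri {a b c : Ω → ℝ}
    (h1 : AEStronglyMeasurable (fun ω => a ω - b ω) μ)
    (h2 : AEStronglyMeasurable (fun ω => b ω - c ω) μ) :
    eLpNorm (fun ω => a ω - c ω) 1 μ ≤
      eLpNorm (fun ω => a ω - b ω) 1 μ + eLpNorm (fun ω => b ω - c ω) 1 μ := by
  have he : (fun ω => a ω - c ω) = fun ω => (a ω - b ω) + (b ω - c ω) := by funext ω; ring
  rw [he]
  exact eLpNorm_add_le h1 h2 le_rfl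

private lemma sub_comm' (a b : Ω → ℝ) :
    eLpNorm (fun ω => a ω - b ω) 1 μ = eLpNorm (fun ω => b ω - a ω) 1 μ :=
  eLpNorm_sub_comm a b 1 μ

private lemma part1
    (𝓕 : Filtration ℤ m0) (X V W : ℤ → Ω → ℝ)
    (hXint : ∀ i, Integrable (X i) μ)
    (hVint : ∀ k, Integrable (V k) μ) (hWint : ∀ k, Integrable (W k) μ)
    (hV : ∀ k : ℤ,
      Tendsto (fun N : ℕ =>
        eLpNorm (fun ω =>
          (∑ i ∈ Finset.range N, (μ[X (k + i) | 𝓕 (k - 1)]) ω) - V k ω) 1 μ)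
        atTop (𝓝 0))
    (hW : ∀ k : ℤ,
      Tendsto (fun N : ℕ =>
        eLpNorm (fun ω =>
          (∑ i ∈ Finset.range N,
            (X (k - (i + 1)) ω - (μ[X (k - (i + 1)) | 𝓕 (k - 1)]) ω)) - W k ω) 1 μ)
        atTop (𝓝 0))
    (U : ℤ → Ω → ℝ) (hU : ∀ k, U k = fun ω => V k ω - W k ω) (k : ℤ) :
    Tendsto (fun j : ℕ => eLpNorm (μ[U (k + j) | 𝓕 k]) 1 μ) atTop (𝓝 0) := by
  have hUint : ∀ i, Integrable (U i) μ := fun i => by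
    rw [hU i]; exact (hVint i).sub (hWint i)
  have hV1 := hV (k + 1)
  simp only [add_sub_cancel_right] at hV1
  have key : ∀ j : ℕ, 1 ≤ j →
      eLpNorm (fun ω => (μ[U (k + (j:ℤ))|𝓕 k]) ω -
        (V (k + 1) ω - ∑ i ∈ Finset.range (j - 1), (μ[X (k + 1 + (i:ℤ))|𝓕 k]) ω)) 1 μ = 0 := by
    intro j hj
    have hkl : k ≤ k + (j:ℤ) - 1 := by omega
    have hle : 𝓕 k ≤ 𝓕 (k + (j:ℤ) - 1) := 𝓕.mono hkl
    set l : ℤ := k + (j:ℤ) with hl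
    refine aux_eq_zero (b := fun N =>
      (eLpNorm (fun ω => (∑ i ∈ Finset.range N, (μ[X (l + (i:ℤ))|𝓕 (l - 1)]) ω) - V l ω) 1 μ +
       eLpNorm (fun ω => (∑ i ∈ Finset.range N,
          (X (l - ((i:ℤ) + 1)) ω - (μ[X (l - ((i:ℤ) + 1))|𝓕 (l - 1)]) ω)) - W l ω) 1 μ) +
      eLpNorm (fun ω => (∑ i ∈ Finset.range (j - 1 + N), (μ[X (k + 1 + (i:ℤ))|𝓕 k]) ω)
        - V (k + 1) ω) 1 μ) ?_ ?_
    · intro N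
      set SN : Ω → ℝ := fun ω => ∑ i ∈ Finset.range N, (μ[X (l + (i:ℤ))|𝓕 (l - 1)]) ω with hSN
      set TN : Ω → ℝ := fun ω => ∑ i ∈ Finset.range N,
          (X (l - ((i:ℤ) + 1)) ω - (μ[X (l - ((i:ℤ) + 1))|𝓕 (l - 1)]) ω) with hTN
      have hSNi : Integrable SN μ := integrable_finset_sum _ fun i _ => integrable_condExp
      have hTNi : Integrable TN μ := integrable_finset_sum _ fun i _ =>
        (hXint _).sub integrable_condExp
      have hANi : Integrable (fun ω => SN ω - TN ω) μ := hSNi.sub hTNi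
      have hS : μ[SN|𝓕 k] =ᵐ[μ] fun ω => ∑ i ∈ Finset.range N, (μ[X (l + (i:ℤ))|𝓕 k]) ω := by
        have h0 : SN = ∑ i ∈ Finset.range N, (μ[X (l + (i:ℤ))|𝓕 (l - 1)]) := by
          funext ω; simp [hSN, Finset.sum_apply]
        rw [h0]
        refine (condExp_finset_sum (fun i _ => integrable_condExp) _).trans ?_
        refine (eventuallyEq_sum fun i _ =>
          condExp_condExp_of_le hle (𝓕.le _)).trans ?_
        exact Eventually.of_forall fun ω => by simp [Finset.sum_apply]
      have hT : μ[TN|𝓕 k] =ᵐ[μ] fun _ => (0:ℝ) := by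
        have h0 : TN = ∑ i ∈ Finset.range N,
            (X (l - ((i:ℤ) + 1)) - μ[X (l - ((i:ℤ) + 1))|𝓕 (l - 1)]) := by
          funext ω; simp [hTN, Finset.sum_apply]
        rw [h0]
        refine (condExp_finset_sum (fun i _ => (hXint _).sub integrable_condExp) _).trans ?_
        have hterm : ∀ i ∈ Finset.range N,
            μ[(X (l - ((i:ℤ) + 1)) - μ[X (l - ((i:ℤ) + 1))|𝓕 (l - 1)])|𝓕 k] =ᵐ[μ]
              (fun _ => (0:ℝ)) := by
          intro i _
          refine (condExp_sub (hXint _) integrable_condExp _).trans ?_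
          filter_upwards [condExp_condExp_of_le hle (𝓕.le (l-1))
            (f := X (l - ((i:ℤ) + 1)))] with ω hω
          simp only [Pi.sub_apply, hω, sub_self]
        refine (eventuallyEq_sum hterm).trans ?_
        exact Eventually.of_forall fun ω => by simp [Finset.sum_apply]
      have hA : μ[fun ω => SN ω - TN ω|𝓕 k] =ᵐ[μ]
          fun ω => ∑ i ∈ Finset.range N, (μ[X (l + (i:ℤ))|𝓕 k]) ω := by
        refine (condExp_sub hSNi hTNi _).trans ?_
        filter_upwards [hS, hT] with ω h1 h2
        simp only [Pi.sub_apply, h1, h2, sub_zero]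
      have hre : ∀ ω, ∑ i ∈ Finset.range N, (μ[X (l + (i:ℤ))|𝓕 k]) ω =
          (∑ i ∈ Finset.range (j - 1 + N), (μ[X (k + 1 + (i:ℤ))|𝓕 k]) ω) -
          ∑ i ∈ Finset.range (j - 1), (μ[X (k + 1 + (i:ℤ))|𝓕 k]) ω := by
        intro ω
        rw [← Finset.sum_Ico_eq_sub _ (Nat.le_add_right (j-1) N),
          Finset.sum_Ico_eq_sum_range]
        simp only [Nat.add_sub_cancel_left]
        refine Finset.sum_congr rfl fun i _ => ?_
        have hc : k + 1 + ((j - 1 + i : ℕ) : ℤ) = l + (i:ℤ) := by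
          simp only [hl]; omega
        rw [hc]
      -- estimate
      have step1 : eLpNorm (fun ω => (μ[U l|𝓕 k]) ω -
            (V (k + 1) ω - ∑ i ∈ Finset.range (j - 1), (μ[X (k + 1 + (i:ℤ))|𝓕 k]) ω)) 1 μ ≤
          eLpNorm (fun ω => (μ[U l|𝓕 k]) ω - (μ[fun ω => SN ω - TN ω|𝓕 k]) ω) 1 μ +
          eLpNorm (fun ω => (μ[fun ω => SN ω - TN ω|𝓕 k]) ω -
            (V (k + 1) ω - ∑ i ∈ Finset.range (j - 1), (μ[X (k + 1 + (i:ℤ))|𝓕 k]) ω)) 1 μ :=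
        tri (integrable_condExp.sub integrable_condExp).aestronglyMeasurable
          (integrable_condExp.sub ((hVint _).sub
            (integrable_finset_sum _ fun i _ => integrable_condExp))).aestronglyMeasurable
      have step2 : eLpNorm (fun ω => (μ[U l|𝓕 k]) ω - (μ[fun ω => SN ω - TN ω|𝓕 k]) ω) 1 μ ≤
          eLpNorm (fun ω => SN ω - V l ω) 1 μ + eLpNorm (fun ω => TN ω - W l ω) 1 μ := by
        refine (cond_diff_le (hUint l) hANi).trans ?_
        have he : (fun ω => U l ω - (SN ω - TN ω)) =
            fun ω => (V l ω - SN ω) + (TN ω - W l ω) := by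
          funext ω; simp only [hU l]; ring
        rw [he]
        refine (eLpNorm_add_le ((hVint l).sub hSNi).aestronglyMeasurable
          (hTNi.sub (hWint l)).aestronglyMeasurable le_rfl).trans ?_
        rw [eLpNorm_sub_comm (V l) SN 1 μ]
        exact le_rfl
      have step3 : eLpNorm (fun ω => (μ[fun ω => SN ω - TN ω|𝓕 k]) ω -
            (V (k + 1) ω - ∑ i ∈ Finset.range (j - 1), (μ[X (k + 1 + (i:ℤ))|𝓕 k]) ω)) 1 μ =
          eLpNorm (fun ω => (∑ i ∈ Finset.range (j - 1 + N), (μ[X (k + 1 + (i:ℤ))|𝓕 k]) ω)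
            - V (k + 1) ω) 1 μ := by
        refine eLpNorm_congr_ae ?_
        filter_upwards [hA] with ω hω
        rw [hω, hre ω]; ring
      calc eLpNorm (fun ω => (μ[U l|𝓕 k]) ω -
            (V (k + 1) ω - ∑ i ∈ Finset.range (j - 1), (μ[X (k + 1 + (i:ℤ))|𝓕 k]) ω)) 1 μ
          ≤ _ + _ := step1
        _ ≤ _ := add_le_add (step2.trans le_rfl) (le_of_eq step3)
    · have h3 : Tendsto (fun N => eLpNorm (fun ω =>
          (∑ i ∈ Finset.range (j - 1 + N), (μ[X (k + 1 + (i:ℤ))|𝓕 k]) ω) - V (k + 1) ω) 1 μ)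
          atTop (𝓝 0) :=
        hV1.comp (tendsto_atTop_mono (fun N => Nat.le_add_left N (j-1)) tendsto_id)
      simpa using ((hV l).add (hW l)).add h3
  -- conclude
  have hbound : ∀ j : ℕ, 1 ≤ j → eLpNorm (μ[U (k + (j:ℤ))|𝓕 k]) 1 μ ≤
      eLpNorm (fun ω => V (k + 1) ω -
        ∑ i ∈ Finset.range (j - 1), (μ[X (k + 1 + (i:ℤ))|𝓕 k]) ω) 1 μ := by
    intro j hj
    have he : (fun ω => (μ[U (k + (j:ℤ))|𝓕 k]) ω) =
        fun ω => ((μ[U (k + (j:ℤ))|𝓕 k]) ω -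
          (V (k + 1) ω - ∑ i ∈ Finset.range (j - 1), (μ[X (k + 1 + (i:ℤ))|𝓕 k]) ω)) +
          (V (k + 1) ω - ∑ i ∈ Finset.range (j - 1), (μ[X (k + 1 + (i:ℤ))|𝓕 k]) ω) := by
      funext ω; ring
    calc eLpNorm (μ[U (k + (j:ℤ))|𝓕 k]) 1 μ
        = eLpNorm (fun ω => ((μ[U (k + (j:ℤ))|𝓕 k]) ω -
            (V (k + 1) ω - ∑ i ∈ Finset.range (j - 1), (μ[X (k + 1 + (i:ℤ))|𝓕 k]) ω)) +
            (V (k + 1) ω - ∑ i ∈ Finset.range (j - 1), (μ[X (k + 1 + (i:ℤ))|𝓕 k]) ω)) 1 μ := by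
          rw [← he]
      _ ≤ eLpNorm (fun ω => (μ[U (k + (j:ℤ))|𝓕 k]) ω -
            (V (k + 1) ω - ∑ i ∈ Finset.range (j - 1), (μ[X (k + 1 + (i:ℤ))|𝓕 k]) ω)) 1 μ +
          eLpNorm (fun ω => V (k + 1) ω -
            ∑ i ∈ Finset.range (j - 1), (μ[X (k + 1 + (i:ℤ))|𝓕 k]) ω) 1 μ :=
          eLpNorm_add_le
            (integrable_condExp.sub ((hVint _).sub
              (integrable_finset_sum _ fun i _ => integrable_condExp))).aestronglyMeasurable
            ((hVint _).sub
              (integrable_finset_sum _ fun i _ => integrable_condExp)).aestronglyMeasurable le_rfl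
      _ = eLpNorm (fun ω => V (k + 1) ω -
            ∑ i ∈ Finset.range (j - 1), (μ[X (k + 1 + (i:ℤ))|𝓕 k]) ω) 1 μ := by
          rw [key j hj, zero_add]
  have heq : ∀ M : ℕ, eLpNorm (fun ω => V (k + 1) ω -
        ∑ i ∈ Finset.range M, (μ[X (k + 1 + (i:ℤ))|𝓕 k]) ω) 1 μ =
      eLpNorm (fun ω => (∑ i ∈ Finset.range M, (μ[X (k + 1 + (i:ℤ))|𝓕 k]) ω) - V (k + 1) ω) 1 μ :=
    fun M => sub_comm' _ _
  have hlim : Tendsto (fun j : ℕ => eLpNorm (fun ω => V (k + 1) ω -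
      ∑ i ∈ Finset.range (j - 1), (μ[X (k + 1 + (i:ℤ))|𝓕 k]) ω) 1 μ) atTop (𝓝 0) := by
    simp only [heq]
    exact hV1.comp (tendsto_sub_atTop_nat 1)
  refine tendsto_of_tendsto_of_tendsto_of_le_of_le' tendsto_const_nhds hlim
    (Eventually.of_forall fun j => zero_le) ?_
  filter_upwards [eventually_ge_atTop 1] with j hj
  exact hbound j hj

private lemma part2
    (𝓕 : Filtration ℤ m0) (X V W : ℤ → Ω → ℝ)
    (hXint : ∀ i, Integrable (X i) μ)
    (hVint : ∀ k, Integrable (V k) μ) (hWint : ∀ k, Integrable (W k) μ)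
    (hV : ∀ k : ℤ,
      Tendsto (fun N : ℕ =>
        eLpNorm (fun ω =>
          (∑ i ∈ Finset.range N, (μ[X (k + i) | 𝓕 (k - 1)]) ω) - V k ω) 1 μ)
        atTop (𝓝 0))
    (hW : ∀ k : ℤ,
      Tendsto (fun N : ℕ =>
        eLpNorm (fun ω =>
          (∑ i ∈ Finset.range N,
            (X (k - (i + 1)) ω - (μ[X (k - (i + 1)) | 𝓕 (k - 1)]) ω)) - W k ω) 1 μ)
        atTop (𝓝 0))
    (U : ℤ → Ω → ℝ) (hU : ∀ k, U k = fun ω => V k ω - W k ω) (k : ℤ) :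
    Tendsto (fun j : ℕ =>
      eLpNorm (fun ω => U (k - j) ω - (μ[U (k - j)|𝓕 k]) ω) 1 μ) atTop (𝓝 0) := by
  have hUint : ∀ i, Integrable (U i) μ := fun i => by
    rw [hU i]; exact (hVint i).sub (hWint i)
  have hW1 := hW (k + 1)
  simp only [add_sub_add_right_eq_sub, add_sub_cancel_right] at hW1
  -- hW1 : Tendsto (fun N => eLpNorm (fun ω => (∑ i ∈ range N,
  --   (X (k - ↑i) ω - (μ[X (k - ↑i)|𝓕 k]) ω)) - W (k+1) ω) 1 μ) atTop (𝓝 0)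
  have key : ∀ j : ℕ,
      eLpNorm (fun ω => (U (k - (j:ℤ)) ω - (μ[U (k - (j:ℤ))|𝓕 k]) ω) -
        ((∑ i ∈ Finset.range (j + 1), (X (k - (i:ℤ)) ω - (μ[X (k - (i:ℤ))|𝓕 k]) ω)) -
          W (k + 1) ω)) 1 μ = 0 := by
    intro j
    have hkl : k - (j:ℤ) - 1 ≤ k := by omega
    have hle' : 𝓕 (k - (j:ℤ) - 1) ≤ 𝓕 k := 𝓕.mono hkl
    set l : ℤ := k - (j:ℤ) with hl
    refine aux_eq_zero (b := fun N =>
      ((eLpNorm (fun ω => (∑ i ∈ Finset.range N, (μ[X (l + (i:ℤ))|𝓕 (l - 1)]) ω) - V l ω) 1 μ +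
        eLpNorm (fun ω => (∑ i ∈ Finset.range N,
          (X (l - ((i:ℤ) + 1)) ω - (μ[X (l - ((i:ℤ) + 1))|𝓕 (l - 1)]) ω)) - W l ω) 1 μ) +
       (eLpNorm (fun ω => (∑ i ∈ Finset.range N, (μ[X (l + (i:ℤ))|𝓕 (l - 1)]) ω) - V l ω) 1 μ +
        eLpNorm (fun ω => (∑ i ∈ Finset.range N,
          (X (l - ((i:ℤ) + 1)) ω - (μ[X (l - ((i:ℤ) + 1))|𝓕 (l - 1)]) ω)) - W l ω) 1 μ)) +
      eLpNorm (fun ω => (∑ i ∈ Finset.range (j + 1 + N),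
        (X (k - (i:ℤ)) ω - (μ[X (k - (i:ℤ))|𝓕 k]) ω)) - W (k + 1) ω) 1 μ) ?_ ?_
    · intro N
      set SN : Ω → ℝ := fun ω => ∑ i ∈ Finset.range N, (μ[X (l + (i:ℤ))|𝓕 (l - 1)]) ω with hSN
      set TN : Ω → ℝ := fun ω => ∑ i ∈ Finset.range N,
          (X (l - ((i:ℤ) + 1)) ω - (μ[X (l - ((i:ℤ) + 1))|𝓕 (l - 1)]) ω) with hTN
      have hSNi : Integrable SN μ := integrable_finset_sum _ fun i _ => integrable_condExp
      have hTNi : Integrable TN μ := integrable_finset_sum _ fun i _ =>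
        (hXint _).sub integrable_condExp
      have hANi : Integrable (fun ω => SN ω - TN ω) μ := hSNi.sub hTNi
      have hS2 : μ[SN|𝓕 k] =ᵐ[μ] SN := by
        have h0 : SN = ∑ i ∈ Finset.range N, (μ[X (l + (i:ℤ))|𝓕 (l - 1)]) := by
          funext ω; simp [hSN, Finset.sum_apply]
        rw [h0]
        refine (condExp_finset_sum (fun i _ => integrable_condExp) _).trans ?_
        refine EventuallyEq.of_eq (Finset.sum_congr rfl fun i _ => ?_)
        exact condExp_of_stronglyMeasurable (𝓕.le k)
          (stronglyMeasurable_condExp.mono hle') integrable_condExp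
      have hT2 : μ[TN|𝓕 k] =ᵐ[μ] fun ω => ∑ i ∈ Finset.range N,
          ((μ[X (l - ((i:ℤ) + 1))|𝓕 k]) ω - (μ[X (l - ((i:ℤ) + 1))|𝓕 (l - 1)]) ω) := by
        have h0 : TN = ∑ i ∈ Finset.range N,
            (X (l - ((i:ℤ) + 1)) - μ[X (l - ((i:ℤ) + 1))|𝓕 (l - 1)]) := by
          funext ω; simp [hTN, Finset.sum_apply]
        rw [h0]
        refine (condExp_finset_sum (fun i _ => (hXint _).sub integrable_condExp) _).trans ?_
        have hterm : ∀ i ∈ Finset.range N,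
            μ[(X (l - ((i:ℤ) + 1)) - μ[X (l - ((i:ℤ) + 1))|𝓕 (l - 1)])|𝓕 k] =ᵐ[μ]
              fun ω => (μ[X (l - ((i:ℤ) + 1))|𝓕 k]) ω - (μ[X (l - ((i:ℤ) + 1))|𝓕 (l - 1)]) ω := by
          intro i _
          refine (condExp_sub (hXint _) integrable_condExp _).trans ?_
          have hid : μ[(μ[X (l - ((i:ℤ) + 1))|𝓕 (l - 1)] : Ω → ℝ)|𝓕 k] =
              μ[X (l - ((i:ℤ) + 1))|𝓕 (l - 1)] :=
            condExp_of_stronglyMeasurable (𝓕.le k)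
              (stronglyMeasurable_condExp.mono hle') integrable_condExp
          refine Eventually.of_forall fun ω => ?_
          simp only [Pi.sub_apply, hid]
        refine (eventuallyEq_sum hterm).trans ?_
        exact Eventually.of_forall fun ω => by simp [Finset.sum_apply]
      have hA2 : μ[fun ω => SN ω - TN ω|𝓕 k] =ᵐ[μ]
          fun ω => (μ[SN|𝓕 k]) ω - (μ[TN|𝓕 k]) ω := condExp_sub hSNi hTNi _
      have hre2 : ∀ ω, ∑ i ∈ Finset.range N,
            (X (l - ((i:ℤ) + 1)) ω - (μ[X (l - ((i:ℤ) + 1))|𝓕 k]) ω) =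
          (∑ i ∈ Finset.range (j + 1 + N),
            (X (k - (i:ℤ)) ω - (μ[X (k - (i:ℤ))|𝓕 k]) ω)) -
          ∑ i ∈ Finset.range (j + 1),
            (X (k - (i:ℤ)) ω - (μ[X (k - (i:ℤ))|𝓕 k]) ω) := by
        intro ω
        rw [← Finset.sum_Ico_eq_sub _ (Nat.le_add_right (j + 1) N),
          Finset.sum_Ico_eq_sum_range]
        simp only [Nat.add_sub_cancel_left]
        refine Finset.sum_congr rfl fun i _ => ?_
        have hc : k - ((j + 1 + i : ℕ) : ℤ) = l - ((i:ℤ) + 1) := by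
          simp only [hl]; omega
        rw [hc]
      have hB : (fun ω => (SN ω - TN ω) - (μ[fun ω => SN ω - TN ω|𝓕 k]) ω) =ᵐ[μ]
          fun ω => (∑ i ∈ Finset.range (j + 1),
              (X (k - (i:ℤ)) ω - (μ[X (k - (i:ℤ))|𝓕 k]) ω)) -
            ∑ i ∈ Finset.range (j + 1 + N),
              (X (k - (i:ℤ)) ω - (μ[X (k - (i:ℤ))|𝓕 k]) ω) := by
        filter_upwards [hA2, hS2, hT2] with ω h1 h2 h3
        rw [h1, h2, h3]
        have hq := hre2 ω
        simp only [hTN, Finset.sum_sub_distrib] at hq ⊢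
        linarith [hq]
      -- estimate
      have step1 : eLpNorm (fun ω => (U l ω - (μ[U l|𝓕 k]) ω) -
            ((∑ i ∈ Finset.range (j + 1),
              (X (k - (i:ℤ)) ω - (μ[X (k - (i:ℤ))|𝓕 k]) ω)) - W (k + 1) ω)) 1 μ ≤
          eLpNorm (fun ω => (U l ω - (μ[U l|𝓕 k]) ω) -
            ((SN ω - TN ω) - (μ[fun ω => SN ω - TN ω|𝓕 k]) ω)) 1 μ +
          eLpNorm (fun ω => ((SN ω - TN ω) - (μ[fun ω => SN ω - TN ω|𝓕 k]) ω) -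
            ((∑ i ∈ Finset.range (j + 1),
              (X (k - (i:ℤ)) ω - (μ[X (k - (i:ℤ))|𝓕 k]) ω)) - W (k + 1) ω)) 1 μ :=
        tri
          ((((hUint l).sub integrable_condExp).sub
            (hANi.sub integrable_condExp)).aestronglyMeasurable)
          (((hANi.sub integrable_condExp).sub
            ((integrable_finset_sum _ fun i _ => (hXint _).sub integrable_condExp).sub
              (hWint _))).aestronglyMeasurable)
      have hUA : eLpNorm (fun ω => U l ω - (SN ω - TN ω)) 1 μ ≤
          eLpNorm (fun ω => SN ω - V l ω) 1 μ + eLpNorm (fun ω => TN ω - W l ω) 1 μ := by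
        have he : (fun ω => U l ω - (SN ω - TN ω)) =
            fun ω => (V l ω - SN ω) + (TN ω - W l ω) := by
          funext ω; simp only [hU l]; ring
        rw [he]
        refine (eLpNorm_add_le ((hVint l).sub hSNi).aestronglyMeasurable
          (hTNi.sub (hWint l)).aestronglyMeasurable le_rfl).trans ?_
        rw [eLpNorm_sub_comm (V l) SN 1 μ]
        exact le_rfl
      have step2 : eLpNorm (fun ω => (U l ω - (μ[U l|𝓕 k]) ω) -
            ((SN ω - TN ω) - (μ[fun ω => SN ω - TN ω|𝓕 k]) ω)) 1 μ ≤
          (eLpNorm (fun ω => SN ω - V l ω) 1 μ + eLpNorm (fun ω => TN ω - W l ω) 1 μ) +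
          (eLpNorm (fun ω => SN ω - V l ω) 1 μ + eLpNorm (fun ω => TN ω - W l ω) 1 μ) := by
        have he : (fun ω => (U l ω - (μ[U l|𝓕 k]) ω) -
              ((SN ω - TN ω) - (μ[fun ω => SN ω - TN ω|𝓕 k]) ω)) =
            fun ω => (U l ω - (SN ω - TN ω)) +
              ((μ[fun ω => SN ω - TN ω|𝓕 k]) ω - (μ[U l|𝓕 k]) ω) := by
          funext ω; ring
        rw [he]
        refine (eLpNorm_add_le
          ((hUint l).sub hANi).aestronglyMeasurable
          (integrable_condExp.sub integrable_condExp).aestronglyMeasurable le_rfl).trans ?_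
        refine add_le_add hUA ?_
        refine (cond_diff_le hANi (hUint l)).trans ?_
        rw [sub_comm' (fun ω => SN ω - TN ω) (U l)]
        exact hUA
      have step3 : eLpNorm (fun ω => ((SN ω - TN ω) - (μ[fun ω => SN ω - TN ω|𝓕 k]) ω) -
            ((∑ i ∈ Finset.range (j + 1),
              (X (k - (i:ℤ)) ω - (μ[X (k - (i:ℤ))|𝓕 k]) ω)) - W (k + 1) ω)) 1 μ =
          eLpNorm (fun ω => (∑ i ∈ Finset.range (j + 1 + N),
            (X (k - (i:ℤ)) ω - (μ[X (k - (i:ℤ))|𝓕 k]) ω)) - W (k + 1) ω) 1 μ := by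
        rw [show eLpNorm (fun ω => (∑ i ∈ Finset.range (j + 1 + N),
            (X (k - (i:ℤ)) ω - (μ[X (k - (i:ℤ))|𝓕 k]) ω)) - W (k + 1) ω) 1 μ =
          eLpNorm (fun ω => W (k + 1) ω - ∑ i ∈ Finset.range (j + 1 + N),
            (X (k - (i:ℤ)) ω - (μ[X (k - (i:ℤ))|𝓕 k]) ω)) 1 μ from sub_comm' _ _]
        refine eLpNorm_congr_ae ?_
        filter_upwards [hB] with ω hω
        rw [hω]; ring
      calc eLpNorm (fun ω => (U l ω - (μ[U l|𝓕 k]) ω) -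
            ((∑ i ∈ Finset.range (j + 1),
              (X (k - (i:ℤ)) ω - (μ[X (k - (i:ℤ))|𝓕 k]) ω)) - W (k + 1) ω)) 1 μ
          ≤ _ + _ := step1
        _ ≤ _ := add_le_add step2 (le_of_eq step3)
    · have h3 : Tendsto (fun N => eLpNorm (fun ω => (∑ i ∈ Finset.range (j + 1 + N),
          (X (k - (i:ℤ)) ω - (μ[X (k - (i:ℤ))|𝓕 k]) ω)) - W (k + 1) ω) 1 μ)
          atTop (𝓝 0) :=
        hW1.comp (tendsto_atTop_mono (fun N => Nat.le_add_left N (j + 1)) tendsto_id)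
      simpa using (((hV l).add (hW l)).add ((hV l).add (hW l))).add h3
  -- conclude
  have hbound : ∀ j : ℕ,
      eLpNorm (fun ω => U (k - (j:ℤ)) ω - (μ[U (k - (j:ℤ))|𝓕 k]) ω) 1 μ ≤
      eLpNorm (fun ω => (∑ i ∈ Finset.range (j + 1),
        (X (k - (i:ℤ)) ω - (μ[X (k - (i:ℤ))|𝓕 k]) ω)) - W (k + 1) ω) 1 μ := by
    intro j
    have he : (fun ω => U (k - (j:ℤ)) ω - (μ[U (k - (j:ℤ))|𝓕 k]) ω) =
        fun ω => ((U (k - (j:ℤ)) ω - (μ[U (k - (j:ℤ))|𝓕 k]) ω) -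
          ((∑ i ∈ Finset.range (j + 1),
            (X (k - (i:ℤ)) ω - (μ[X (k - (i:ℤ))|𝓕 k]) ω)) - W (k + 1) ω)) +
          ((∑ i ∈ Finset.range (j + 1),
            (X (k - (i:ℤ)) ω - (μ[X (k - (i:ℤ))|𝓕 k]) ω)) - W (k + 1) ω) := by
      funext ω; ring
    calc eLpNorm (fun ω => U (k - (j:ℤ)) ω - (μ[U (k - (j:ℤ))|𝓕 k]) ω) 1 μ
        = eLpNorm (fun ω => ((U (k - (j:ℤ)) ω - (μ[U (k - (j:ℤ))|𝓕 k]) ω) -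
            ((∑ i ∈ Finset.range (j + 1),
              (X (k - (i:ℤ)) ω - (μ[X (k - (i:ℤ))|𝓕 k]) ω)) - W (k + 1) ω)) +
            ((∑ i ∈ Finset.range (j + 1),
              (X (k - (i:ℤ)) ω - (μ[X (k - (i:ℤ))|𝓕 k]) ω)) - W (k + 1) ω)) 1 μ := by
          rw [← he]
      _ ≤ eLpNorm (fun ω => (U (k - (j:ℤ)) ω - (μ[U (k - (j:ℤ))|𝓕 k]) ω) -
            ((∑ i ∈ Finset.range (j + 1),
              (X (k - (i:ℤ)) ω - (μ[X (k - (i:ℤ))|𝓕 k]) ω)) - W (k + 1) ω)) 1 μ +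
          eLpNorm (fun ω => (∑ i ∈ Finset.range (j + 1),
              (X (k - (i:ℤ)) ω - (μ[X (k - (i:ℤ))|𝓕 k]) ω)) - W (k + 1) ω) 1 μ :=
          eLpNorm_add_le
            ((((hUint _).sub integrable_condExp).sub
              ((integrable_finset_sum _ fun i _ => (hXint _).sub integrable_condExp).sub
                (hWint _))).aestronglyMeasurable)
            (((integrable_finset_sum _ fun i _ => (hXint _).sub integrable_condExp).sub
              (hWint _)).aestronglyMeasurable) le_rfl
      _ = eLpNorm (fun ω => (∑ i ∈ Finset.range (j + 1),
              (X (k - (i:ℤ)) ω - (μ[X (k - (i:ℤ))|𝓕 k]) ω)) - W (k + 1) ω) 1 μ := by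
          rw [key j, zero_add]
  have hlim : Tendsto (fun j : ℕ => eLpNorm (fun ω => (∑ i ∈ Finset.range (j + 1),
      (X (k - (i:ℤ)) ω - (μ[X (k - (i:ℤ))|𝓕 k]) ω)) - W (k + 1) ω) 1 μ) atTop (𝓝 0) :=
    hW1.comp (tendsto_add_atTop_nat 1)
  refine tendsto_of_tendsto_of_tendsto_of_le_of_le' tendsto_const_nhds hlim
    (Eventually.of_forall fun j => zero_le) (Eventually.of_forall fun j => hbound j)

end Aux

/-- Under the sufficiency hypotheses of Theorem 1 (the series `V_k` and `W_k`
converge in `L¹`), the functions `U_k = V_k - W_k` satisfy the tail conditions (2):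
for every `k`, `E(U_{k+j}|𝓕_k) → 0` and `U_{k-j} - E(U_{k-j}|𝓕_k) → 0` in `L¹`. -/
theorem coboundary_tail_conditions
    {Ω : Type*} {m0 : MeasurableSpace Ω} {μ : Measure Ω} [IsProbabilityMeasure μ]
    (𝓕 : Filtration ℤ m0) (X V W : ℤ → Ω → ℝ)
    (hXint : ∀ i, Integrable (X i) μ)
    (hXmeas : ∀ i, AEStronglyMeasurable[⨆ j, 𝓕 j] (X i) μ)
    (hXtail : ∀ i, μ[X i | ⨅ j, 𝓕 j] =ᵐ[μ] 0)
    (hVint : ∀ k, Integrable (V k) μ)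
    (hWint : ∀ k, Integrable (W k) μ)
    (hV : ∀ k : ℤ,
      Tendsto (fun N : ℕ =>
        eLpNorm (fun ω =>
          (∑ i ∈ Finset.range N, (μ[X (k + i) | 𝓕 (k - 1)]) ω) - V k ω) 1 μ)
        atTop (𝓝 0))
    (hW : ∀ k : ℤ,
      Tendsto (fun N : ℕ =>
        eLpNorm (fun ω =>
          (∑ i ∈ Finset.range N,
            (X (k - (i + 1)) ω - (μ[X (k - (i + 1)) | 𝓕 (k - 1)]) ω)) - W k ω) 1 μ)
        atTop (𝓝 0))
    (U : ℤ → Ω → ℝ)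
    (hU : ∀ k, U k = fun ω => V k ω - W k ω) :
    ∀ k : ℤ,
      Tendsto (fun j : ℕ => eLpNorm (μ[U (k + j) | 𝓕 k]) 1 μ) atTop (𝓝 0) ∧
      Tendsto (fun j : ℕ =>
        eLpNorm (fun ω => U (k - j) ω - (μ[U (k - j) | 𝓕 k]) ω) 1 μ) atTop (𝓝 0) := by
  intro k
  exact ⟨part1 𝓕 X V W hXint hVint hWint hV hW U hU k,
    part2 𝓕 X V W hXint hVint hWint hV hW U hU k⟩
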